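/- Fix integers 1 ≤ ℓ ≤ d and reals b_1 > b_2 > ⋯ > b_d > 0, and let M be an ℓ×d complex matrix. Let I ⊆ {1,…,d} be an ℓ-element subset such that the columns {M^i : i ∈ I} are linearly independent (ω_M(I) ≠ 0) and such that ω_M(J) = 0 for every ℓ-element subset J with p_J > p_I. Then ω_M(J) = 0 for every ℓ-element subset J with J ≺ I in the lexicographic order. -/

import Mathlib

/-- The minor `ω_M(I)` of an `ℓ×d` matrix `M`: the determinant of the `ℓ×ℓ` submatrix of
`M` whose columns are those indexed by `I`, taken in increasing order (defined to be `0`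
when `I` does not have `ℓ` elements). -/
noncomputable def minorOn {ℓ d : ℕ} (M : Matrix (Fin ℓ) (Fin d) ℂ)
    (I : Finset (Fin d)) : ℂ :=
  if h : I.card = ℓ then
    (M.submatrix id (fun t : Fin ℓ => ((I.orderIsoOfFin h t) : Fin d))).det
  else 0

open Matrix Finset Submodule Module

lemma minor_ne_iff {ℓ d : ℕ} (M : Matrix (Fin ℓ) (Fin d) ℂ) (K : Finset (Fin d))
    (hK : K.card = ℓ) :
    minorOn M K ≠ 0 ↔
      LinearIndependent ℂ (fun t : Fin ℓ => Mᵀ ((K.orderIsoOfFin hK t : Fin d))) := by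
  rw [minorOn, dif_pos hK]
  set A := M.submatrix id (fun t : Fin ℓ => ((K.orderIsoOfFin hK t) : Fin d)) with hA
  have h1 : (fun t : Fin ℓ => Mᵀ ((K.orderIsoOfFin hK t : Fin d))) = A.col := by
    funext t; funext r; rfl
  rw [h1, Matrix.linearIndependent_cols_iff_isUnit, Matrix.isUnit_iff_isUnit_det,
    isUnit_iff_ne_zero]

/-- **Corollary B.6.** Fix `b_1 > ⋯ > b_d > 0` and an `ℓ×d` complex matrix `M`. Let `I`
be an `ℓ`-element subset with `ω_M(I) ≠ 0` and `ω_M(J) = 0` whenever `p_J > p_I`. Then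
`ω_M(J) = 0` for every `ℓ`-element subset `J` lexicographically smaller than `I`. -/
theorem stmt7 (ℓ d : ℕ) (hℓ1 : 1 ≤ ℓ) (hℓd : ℓ ≤ d)
    (b : Fin d → ℝ) (hb : StrictAnti b) (hbpos : ∀ i, 0 < b i)
    (M : Matrix (Fin ℓ) (Fin d) ℂ)
    (I : Finset (Fin d)) (hI : I.card = ℓ)
    (hIne : minorOn M I ≠ 0)
    (hvanish : ∀ J : Finset (Fin d), J.card = ℓ →
      (∏ i ∈ I, b i) < ∏ i ∈ J, b i → minorOn M J = 0) :
    ∀ (J : Finset (Fin d)) (hJ : J.card = ℓ),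
      (∃ s : Fin ℓ,
        (∀ t : Fin ℓ, t < s →
          ((J.orderIsoOfFin hJ t : Fin d) = (I.orderIsoOfFin hI t : Fin d))) ∧
        ((J.orderIsoOfFin hJ s : Fin d) < (I.orderIsoOfFin hI s : Fin d))) →
      minorOn M J = 0 := by
  rintro J hJ ⟨s, hagree, hlt⟩
  by_contra hJne
  have : Nonempty (Fin ℓ) := ⟨⟨0, hℓ1⟩⟩
  set eI : Fin ℓ → Fin d := fun t => (I.orderIsoOfFin hI t : Fin d) with heI
  set eJ : Fin ℓ → Fin d := fun t => (J.orderIsoOfFin hJ t : Fin d) with heJ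
  have heImono : StrictMono eI := fun a c h => by
    exact_mod_cast (I.orderIsoOfFin hI).strictMono h
  have heJmono : StrictMono eJ := fun a c h => by
    exact_mod_cast (J.orderIsoOfFin hJ).strictMono h
  have heImem : ∀ t, eI t ∈ I := fun t => (I.orderIsoOfFin hI t).2
  have hagree' : ∀ t : Fin ℓ, t < s → eJ t = eI t := hagree
  have hlt' : eJ s < eI s := hlt
  have hrank : finrank ℂ (Fin ℓ → ℂ) = ℓ := by simp
  have hcard : Fintype.card (Fin ℓ) = finrank ℂ (Fin ℓ → ℂ) := by simp
  have hLI : LinearIndependent ℂ (fun t => Mᵀ (eI t)) := (minor_ne_iff M I hI).mp hIne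
  have hLJ : LinearIndependent ℂ (fun t => Mᵀ (eJ t)) := (minor_ne_iff M J hJ).mp hJne
  set bI := basisOfLinearIndependentOfCardEqFinrank hLI hcard with hbI
  set j : Fin d := eJ s with hj
  set c : Fin ℓ → ℂ := fun t => bI.repr (Mᵀ j) t with hc
  have hsum : ∑ t, c t • Mᵀ (eI t) = Mᵀ j := by
    have := bI.sum_repr (Mᵀ j)
    simpa [hbI, hc] using this
  -- find t₀ ≥ s with c t₀ ≠ 0
  have hex : ∃ t₀, s ≤ t₀ ∧ c t₀ ≠ 0 := by
    by_contra hcon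
    push_neg at hcon
    have hzero : ∀ t, ¬ t < s → c t = 0 := fun t ht => hcon t (le_of_not_gt ht)
    have hmem : Mᵀ j ∈ span ℂ ((fun t => Mᵀ (eJ t)) '' {t | t < s}) := by
      rw [← hsum]
      apply Submodule.sum_mem
      intro t _
      by_cases ht : t < s
      · apply Submodule.smul_mem
        apply Submodule.subset_span
        exact ⟨t, ht, congrArg Mᵀ (hagree' t ht)⟩
      · rw [hzero t ht, zero_smul]; exact Submodule.zero_mem _
    exact hLJ.notMem_span_image (by simp) hmem
  obtain ⟨t₀, hst₀, hct₀⟩ := hex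
  set i : Fin d := eI t₀ with hi
  have hji : j < i := lt_of_lt_of_le hlt' (by
    rcases eq_or_lt_of_le hst₀ with h | h
    · rw [h]
    · exact le_of_lt (heImono h))
  have hjI : j ∉ I := by
    intro hmem
    set t := (I.orderIsoOfFin hI).symm ⟨j, hmem⟩ with ht
    have hjt : eI t = j :=
      congrArg Subtype.val ((I.orderIsoOfFin hI).apply_symm_apply ⟨j, hmem⟩)
    rcases lt_or_ge t s with h | h
    · have h2 := heJmono h
      rw [hagree' t h, hjt] at h2
      exact absurd h2 (lt_irrefl j)
    · have h2 : eI s ≤ eI t := heImono.monotone h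
      rw [hjt] at h2
      exact absurd h2 (not_le.mpr hlt')
  set K : Finset (Fin d) := insert j (I.erase i) with hK
  have hiI : i ∈ I := heImem t₀
  have hjKe : j ∉ I.erase i := fun h => hjI (Finset.mem_of_mem_erase h)
  have hKcard : K.card = ℓ := by
    rw [hK, Finset.card_insert_of_notMem hjKe, Finset.card_erase_of_mem hiI, hI]
    omega
  have hprod : (∏ i ∈ I, b i) < ∏ i ∈ K, b i := by
    rw [hK, Finset.prod_insert hjKe, ← Finset.mul_prod_erase I b hiI]
    have hpos : 0 < ∏ x ∈ I.erase i, b x := Finset.prod_pos (fun x _ => hbpos x)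
    exact mul_lt_mul_of_pos_right (hb hji) hpos
  -- K is linearly independent, contradiction with hvanish
  have hKzero : minorOn M K = 0 := hvanish K hKcard hprod
  set S : Submodule ℂ (Fin ℓ → ℂ) := span ℂ (Mᵀ '' ↑K) with hS
  have hmemS : ∀ x ∈ K, Mᵀ x ∈ S := fun x hx =>
    Submodule.subset_span ⟨x, hx, rfl⟩
  have hinjI : Function.Injective eI := heImono.injective
  have hItoS : ∀ t, Mᵀ (eI t) ∈ S := by
    intro t
    by_cases ht : t = t₀
    · -- Mᵀ i via exchange
      have hrest : ∀ u ∈ Finset.univ.erase t₀, c u • Mᵀ (eI u) ∈ S := by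
        intro u hu
        apply Submodule.smul_mem
        apply hmemS
        rw [hK]
        apply Finset.mem_insert_of_mem
        apply Finset.mem_erase.mpr
        exact ⟨fun h => (Finset.mem_erase.mp hu).1 (hinjI h), heImem u⟩
      have hsplit : c t₀ • Mᵀ i = Mᵀ j - ∑ u ∈ Finset.univ.erase t₀, c u • Mᵀ (eI u) := by
        rw [← hsum, ← Finset.add_sum_erase _ _ (Finset.mem_univ t₀)]
        abel
      have h1 : c t₀ • Mᵀ i ∈ S := by
        rw [hsplit]
        exact Submodule.sub_mem _ (hmemS j (by rw [hK]; exact Finset.mem_insert_self _ _))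
          (Submodule.sum_mem _ hrest)
      subst ht
      have h2 := Submodule.smul_mem S (c t)⁻¹ h1
      rwa [smul_smul, inv_mul_cancel₀ hct₀, one_smul] at h2
    · apply hmemS
      rw [hK]
      exact Finset.mem_insert_of_mem (Finset.mem_erase.mpr ⟨fun h => ht (hinjI h), heImem t⟩)
  have htop : ⊤ ≤ S := by
    rw [← hLI.span_eq_top_of_card_eq_finrank hcard]
    apply Submodule.span_le.mpr
    rintro x ⟨t, rfl⟩
    exact hItoS t
  set eK : Fin ℓ → Fin d := fun t => (K.orderIsoOfFin hKcard t : Fin d) with heK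
  have hrange : Set.range (fun t => Mᵀ (eK t)) = Mᵀ '' ↑K := by
    ext x
    constructor
    · rintro ⟨t, rfl⟩; exact ⟨eK t, (K.orderIsoOfFin hKcard t).2, rfl⟩
    · rintro ⟨y, hy, rfl⟩
      exact ⟨(K.orderIsoOfFin hKcard).symm ⟨y, hy⟩,
        congrArg Mᵀ (congrArg Subtype.val ((K.orderIsoOfFin hKcard).apply_symm_apply ⟨y, hy⟩))⟩
  have hLK : LinearIndependent ℂ (fun t => Mᵀ (eK t)) := by
    apply linearIndependent_of_top_le_span_of_card_eq_finrank _ hcard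
    rw [hrange]; exact htop
  exact (minor_ne_iff M K hKcard).mpr hLK hKzero
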